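/- Let G be a finite connected simple graph that is a tree, and let dist denote its shortest-path graph distance. Then there exist a positive integer m and a map φ from the vertex set of G to ℝ^m such that ‖φ(u) − φ(v)‖² = dist(u, v) for all vertices u, v of G, where ‖·‖ is the Euclidean norm on ℝ^m. Equivalently, the snowflake (V(G), dist^{1/2}) embeds isometrically into Euclidean space ℝ^m. -/

import Mathlib

open SimpleGraph Finset
open scoped symmDiff

section aux

variable {V : Type*} [DecidableEq V] {G : SimpleGraph V}

/-- In a tree, any path realizes the graph distance. -/
lemma aux_path_length_eq_dist (hT : G.IsTree) {u v : V} (p : G.Walk u v)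
    (hp : p.IsPath) : p.length = G.dist u v := by
  obtain ⟨q, hq⟩ := hT.isConnected.exists_walk_length_eq_dist u v
  have hbp : q.bypass = p := (hT.existsUnique_path u v).unique q.bypass_isPath hp
  have h1 : p.length ≤ G.dist u v := by
    rw [← hq, ← hbp]; exact q.length_bypass_le
  exact le_antisymm h1 (SimpleGraph.dist_le p)

lemma aux_insert_symmDiff {α : Type*} [DecidableEq α] {e : α} {s : Finset α}
    (h : e ∉ s) : (insert e s) ∆ s = {e} := by
  ext a
  simp only [Finset.mem_symmDiff, Finset.mem_insert, Finset.mem_singleton]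
  by_cases ha : a = e <;> simp [ha, h] <;> tauto

end aux

/-- for a finite tree `G` with shortest-path distance `dist`, there is a map
`φ` of the vertices into some Euclidean space `ℝ^m` with `‖φ u - φ v‖² = dist u v`;
i.e. the `1/2`-snowflake of the tree metric embeds isometrically into Euclidean space. -/
theorem tree_sqrt_euclidean_embedding {V : Type*} [Fintype V]
    (G : SimpleGraph V) (hT : G.IsTree) :
    ∃ (m : ℕ) (φ : V → EuclideanSpace ℝ (Fin m)), 0 < m ∧
      ∀ u v : V, ‖φ u - φ v‖ ^ 2 = (G.dist u v : ℝ) := by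
  classical
  obtain ⟨r⟩ := hT.isConnected.nonempty
  choose f hf hfu using hT.existsUnique_path r
  -- the set of edges on the unique path from the root to `v`
  set S : V → Finset (Sym2 V) := fun v => (f v).edges.toFinset with hS
  -- adjacency step: symmetric difference along an edge
  have hadj : ∀ u v : V, G.Adj u v → S u ∆ S v = {s(u, v)} := by
    intro u v h
    by_cases hv : v ∈ (f u).support
    · -- f u passes through v, and f u = f v ++ [edge v u]
      have htu : ((f u).takeUntil v hv).IsPath := (hf u).takeUntil hv
      have hfv : (f u).takeUntil v hv = f v := hfu v _ htu
      have hdp : ((f u).dropUntil v hv).IsPath := (hf u).dropUntil hv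
      have hsing : (f u).dropUntil v hv = SimpleGraph.Walk.cons h.symm SimpleGraph.Walk.nil :=
        (hT.existsUnique_path v u).unique hdp
          (SimpleGraph.Walk.IsPath.nil.cons (by simpa using h.ne.symm))
      have hedges : (f u).edges = (f v).edges ++ [s(v, u)] := by
        conv_lhs => rw [← (f u).take_spec hv]
        rw [SimpleGraph.Walk.edges_append, hfv, hsing]
        simp
      have hnotmem : s(v, u) ∉ (f v).edges := by
        intro hmem
        have := (hf u).edges_nodup
        rw [hedges] at this
        exact (List.disjoint_of_nodup_append this) hmem (by simp)
      have hSu : S u = insert s(v, u) (S v) := by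
        simp [hS, hedges, List.toFinset_append]
      have : S u ∆ S v = {s(v, u)} := by
        rw [hSu]; exact aux_insert_symmDiff (by simp only [hS]; simpa using hnotmem)
      rw [this]
      simp [Sym2.eq_swap]
    · -- extend f u by the edge u v
      have hcon : ((f u).concat h).IsPath := by
        rw [SimpleGraph.Walk.isPath_def, SimpleGraph.Walk.support_concat,
          List.nodup_append']
        exact ⟨(hf u).support_nodup, List.nodup_singleton v,
          by simpa using fun hvv => hv hvv⟩
      have hfv : (f u).concat h = f v := hfu v _ hcon
      have hedges : (f v).edges = (f u).edges ++ [s(u, v)] := by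
        rw [← hfv, SimpleGraph.Walk.edges_concat, List.concat_eq_append]
      have hnotmem : s(u, v) ∉ (f u).edges := by
        intro hmem
        exact hv ((f u).snd_mem_support_of_mem_edges hmem)
      have hSv : S v = insert s(u, v) (S u) := by
        simp [hS, hedges, List.toFinset_append]
      rw [symmDiff_comm, hSv]
      exact aux_insert_symmDiff (by simp only [hS]; simpa using hnotmem)
  -- path version: symmetric difference along a path
  have hpath : ∀ (u v : V) (p : G.Walk u v), p.IsPath → S u ∆ S v = p.edges.toFinset := by
    intro u v p
    induction p with
    | nil => intro _; simp
    | @cons u w v h q ih =>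
      intro hp
      rw [SimpleGraph.Walk.cons_isPath_iff] at hp
      have h1 : S u ∆ S w = {s(u, w)} := hadj u w h
      have h2 : S w ∆ S v = q.edges.toFinset := ih hp.1
      have h3 : S u ∆ S v = (S u ∆ S w) ∆ (S w ∆ S v) := by
        rw [symmDiff_assoc, symmDiff_symmDiff_cancel_left]
      rw [h3, h1, h2]
      have hnm : s(u, w) ∉ q.edges.toFinset := by
        simp only [List.mem_toFinset]
        intro hmem
        exact hp.2 (q.fst_mem_support_of_mem_edges hmem)
      ext a
      simp only [Finset.mem_symmDiff, SimpleGraph.Walk.edges_cons, List.toFinset_cons,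
        Finset.mem_insert, Finset.mem_singleton, List.mem_toFinset] at *
      by_cases ha : a = s(u, w) <;> simp [ha] <;> tauto
  -- cardinality of the symmetric difference is the distance
  have hcard : ∀ u v : V, (S u ∆ S v).card = G.dist u v := by
    intro u v
    obtain ⟨p, hp, -⟩ := hT.existsUnique_path u v
    rw [hpath u v p hp, List.toFinset_card_of_nodup hp.edges_nodup,
      SimpleGraph.Walk.length_edges, aux_path_length_eq_dist hT p hp]
  -- build the embedding
  have : Nonempty (Sym2 V) := ⟨s(r, r)⟩
  set m := Fintype.card (Sym2 V) with hm
  set e : Sym2 V ≃ Fin m := Fintype.equivFin (Sym2 V) with he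
  refine ⟨m, fun v => WithLp.toLp 2 fun i => if e.symm i ∈ S v then (1 : ℝ) else 0, Fintype.card_pos, ?_⟩
  intro u v
  rw [EuclideanSpace.norm_eq, Real.sq_sqrt (by positivity)]
  have hterm : ∀ i : Fin m,
      ‖(if e.symm i ∈ S u then (1 : ℝ) else 0) - (if e.symm i ∈ S v then (1 : ℝ) else 0)‖ ^ 2
        = if e.symm i ∈ S u ∆ S v then (1 : ℝ) else 0 := by
    intro i
    by_cases h1 : e.symm i ∈ S u <;> by_cases h2 : e.symm i ∈ S v <;>
      simp [h1, h2, Finset.mem_symmDiff]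
  have hsum : ∑ i : Fin m,
      ‖(if e.symm i ∈ S u then (1 : ℝ) else 0) - (if e.symm i ∈ S v then (1 : ℝ) else 0)‖ ^ 2
        = ((S u ∆ S v).card : ℝ) := by
    rw [Finset.sum_congr rfl fun i _ => hterm i]
    rw [Equiv.sum_comp e.symm (fun a => if a ∈ S u ∆ S v then (1 : ℝ) else 0)]
    rw [Finset.sum_ite_mem, Finset.univ_inter, Finset.sum_const, nsmul_eq_mul, mul_one]
  rw [← hcard u v, ← hsum]
  congr 1
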